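/- Let a ∈ ℝ, b < 0, c > 0 and consider y' = a·y + b·√y + c, y(0) = 1 (with a, b, c derived from p ∈ (0,1): a = p(r + (μ−r)²/(2σ²(1−p))), b = −p√(3(1−p)σ²γ)/(2π), c = γp/2). The right-hand side g(y) = a y + b√y + c is locally Lipschitz on (0, ∞), and the ODE admits a unique positive solution defined on all of [0, ∞). -/

import Mathlib

open Set Filter MeasureTheory intervalIntegral

lemma sqrt_diff_le (m x x' : ℝ) (hm : 0 < m) (hx : m ≤ x) (hx' : m ≤ x') :
    |Real.sqrt x - Real.sqrt x'| ≤ |x - x'| / (2 * Real.sqrt m) := by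
  wlog h : x' ≤ x generalizing x x'
  · rw [abs_sub_comm, abs_sub_comm x x']; exact this x' x hx' hx (le_of_not_ge h)
  have hm0 : 0 < Real.sqrt m := Real.sqrt_pos.2 hm
  have h1 : Real.sqrt x' ≤ Real.sqrt x := Real.sqrt_le_sqrt h
  have h2 : Real.sqrt m ≤ Real.sqrt x' := Real.sqrt_le_sqrt hx'
  have h3 : Real.sqrt m ≤ Real.sqrt x := Real.sqrt_le_sqrt hx
  have hx0 : (0:ℝ) ≤ x := le_trans hm.le hx
  have hx'0 : (0:ℝ) ≤ x' := le_trans hm.le hx'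
  have e1 : Real.sqrt x ^ 2 = x := Real.sq_sqrt hx0
  have e2 : Real.sqrt x' ^ 2 = x' := Real.sq_sqrt hx'0
  rw [abs_of_nonneg (sub_nonneg.2 h1), abs_of_nonneg (sub_nonneg.2 h),
    le_div_iff₀ (by positivity)]
  nlinarith [sub_nonneg.2 h1]

lemma lipOn (a b c m : ℝ) (hm : 0 < m) :
    LipschitzOnWith (Real.toNNReal (|a| + |b| / (2 * Real.sqrt m)))
      (fun y => a * y + b * Real.sqrt y + c) (Set.Ici m) := by
  apply LipschitzOnWith.of_dist_le_mul
  intro x hx y hy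
  have hm0 : 0 < Real.sqrt m := Real.sqrt_pos.2 hm
  have hnn : 0 ≤ |a| + |b| / (2 * Real.sqrt m) := by positivity
  rw [Real.dist_eq, Real.dist_eq, Real.coe_toNNReal _ hnn]
  have hs := sqrt_diff_le m x y hm hx hy
  calc |(a * x + b * Real.sqrt x + c) - (a * y + b * Real.sqrt y + c)|
      = |a * (x - y) + b * (Real.sqrt x - Real.sqrt y)| := by ring_nf
    _ ≤ |a * (x - y)| + |b * (Real.sqrt x - Real.sqrt y)| := abs_add_le _ _
    _ = |a| * |x - y| + |b| * |Real.sqrt x - Real.sqrt y| := by rw [abs_mul, abs_mul]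
    _ ≤ |a| * |x - y| + |b| * (|x - y| / (2 * Real.sqrt m)) :=
        add_le_add (le_refl _) (mul_le_mul_of_nonneg_left hs (abs_nonneg b))
    _ = (|a| + |b| / (2 * Real.sqrt m)) * |x - y| := by ring

/-- Core construction: solution of an autonomous ODE on a bounded interval via the time map. -/
lemma core_ode (g : ℝ → ℝ) (l s x₀ K : ℝ) (hlx : l < x₀) (hxs : x₀ < s) (hK : 0 < K)
    (hcont : ContinuousOn g (Set.Ioo l s))
    (hpos : ∀ x ∈ Set.Ioo l s, 0 < g x)
    (hbound : ∀ x ∈ Set.Ico x₀ s, g x ≤ K * (s - x)) :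
    ∃ y : ℝ → ℝ, y 0 = x₀ ∧ (∀ t, 0 ≤ t → y t ∈ Set.Ioo l s) ∧
      (∀ t, 0 ≤ t → HasDerivAt y (g (y t)) t) := by
  have hx₀ : x₀ ∈ Set.Ioo l s := ⟨hlx, hxs⟩
  set f : ℝ → ℝ := fun u => (g u)⁻¹ with hf
  have hopen : IsOpen (Set.Ioo l s) := isOpen_Ioo
  have hfc : ContinuousOn f (Set.Ioo l s) := hcont.inv₀ fun x hx => (hpos x hx).ne'
  have hfca : ∀ x ∈ Set.Ioo l s, ContinuousAt f x :=
    fun x hx => hfc.continuousAt (hopen.mem_nhds hx)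
  set T : ℝ → ℝ := fun x => ∫ u in x₀..x, f u with hTdef
  have hT : ∀ x ∈ Set.Ioo l s, HasDerivAt T (f x) x := by
    intro x hx
    apply intervalIntegral.integral_hasDerivAt_right
    · apply ContinuousOn.intervalIntegrable
      exact hfc.mono (Set.ordConnected_Ioo.uIcc_subset hx₀ hx)
    · exact hfc.stronglyMeasurableAtFilter hopen x hx
    · exact hfca x hx
  have hTc : ContinuousOn T (Set.Ioo l s) :=
    fun x hx => (hT x hx).continuousAt.continuousWithinAt
  have hmono : StrictMonoOn T (Set.Ioo l s) := by
    apply strictMonoOn_of_deriv_pos (convex_Ioo l s) hTc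
    intro x hx
    rw [interior_Ioo] at hx
    rw [(hT x hx).deriv]
    exact inv_pos.2 (hpos x hx)
  have hT0 : T x₀ = 0 := intervalIntegral.integral_same
  set φ : ℝ → ℝ := fun x => -Real.log (s - x) / K with hφdef
  have hφd : ∀ x ∈ Set.Ioo l s, HasDerivAt φ ((K * (s - x))⁻¹) x := by
    intro x hx
    have hsx : 0 < s - x := sub_pos.2 hx.2
    have h1 : HasDerivAt (fun x : ℝ => s - x) (-1) x := by
      simpa using (hasDerivAt_id x).const_sub s
    have h2 : HasDerivAt (fun x : ℝ => Real.log (s - x)) ((s - x)⁻¹ * (-1)) x :=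
      (Real.hasDerivAt_log hsx.ne').comp x h1
    have h3 := (h2.neg).div_const K
    refine h3.congr_deriv ?_
    rw [mul_inv]
    ring
  have hcomp : ∀ x ∈ Set.Ico x₀ s, φ x - φ x₀ ≤ T x := by
    rintro x ⟨hx1, hx2⟩
    rcases eq_or_lt_of_le hx1 with rfl | hx1
    · simp [hT0]
    have hsub : Set.Icc x₀ x ⊆ Set.Ioo l s := fun z hz => ⟨lt_of_lt_of_le hlx hz.1,
        lt_of_le_of_lt hz.2 hx2⟩
    have hsub' : Set.Ioo x₀ x ⊆ Set.Ioo l s := Set.Subset.trans Set.Ioo_subset_Icc_self hsub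
    have hψ : MonotoneOn (fun x => T x - φ x) (Set.Icc x₀ x) := by
      apply monotoneOn_of_deriv_nonneg (convex_Icc x₀ x)
      · exact (hTc.mono hsub).sub fun z hz => (hφd z (hsub hz)).continuousAt.continuousWithinAt
      · intro z hz
        rw [interior_Icc] at hz
        exact ((hT z (hsub' hz)).sub (hφd z (hsub' hz))).differentiableAt.differentiableWithinAt
      · intro z hz
        rw [interior_Icc] at hz
        have hzm := hsub' hz
        rw [show (fun x => T x - φ x) = T - φ from rfl, ((hT z hzm).sub (hφd z hzm)).deriv]
        have hgz := hpos z hzm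
        have hb := hbound z ⟨hz.1.le, hzm.2⟩
        have h1 : (K * (s - z))⁻¹ ≤ f z := inv_anti₀ hgz hb
        linarith
    have := hψ (Set.left_mem_Icc.2 hx1.le) (Set.right_mem_Icc.2 hx1.le) hx1.le
    simp only [hT0, zero_sub] at this
    linarith
  have hstop : Tendsto (fun x => s - x) (nhdsWithin s (Set.Iio s)) (nhdsWithin 0 (Set.Ioi 0)) := by
    apply tendsto_nhdsWithin_of_tendsto_nhds_of_eventually_within
    · have h : Tendsto (fun x => s - x) (nhds s) (nhds (s - s)) :=
        tendsto_const_nhds.sub tendsto_id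
      rw [sub_self] at h
      exact h.mono_left nhdsWithin_le_nhds
    · exact eventually_nhdsWithin_of_forall fun x hx => Set.mem_Ioi.2 (sub_pos.2 hx)
  have hφtop : Tendsto φ (nhdsWithin s (Set.Iio s)) atTop := by
    have h1 : Tendsto (fun x => Real.log (s - x)) (nhdsWithin s (Set.Iio s)) atBot :=
      Real.tendsto_log_nhdsGT_zero.comp hstop
    have h2 : Tendsto (fun x => -Real.log (s - x)) (nhdsWithin s (Set.Iio s)) atTop :=
      tendsto_neg_atBot_atTop.comp h1
    exact h2.atTop_div_const hK
  have hTtop : Tendsto T (nhdsWithin s (Set.Iio s)) atTop := by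
    apply tendsto_atTop_mono' _ _ ((hφtop.atTop_add (tendsto_const_nhds (x := -φ x₀))))
    filter_upwards [Ioo_mem_nhdsLT_of_mem ⟨hxs, le_refl s⟩] with x hx
    have := hcomp x ⟨hx.1.le, hx.2⟩
    simpa [sub_eq_add_neg] using this
  set l' : ℝ := (l + x₀) / 2 with hl'def
  have hl'1 : l < l' := by rw [hl'def]; linarith
  have hl'2 : l' < x₀ := by rw [hl'def]; linarith
  have hl'm : l' ∈ Set.Ioo l s := ⟨hl'1, lt_trans hl'2 hxs⟩
  set t₀ : ℝ := T l' with ht₀def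
  have ht₀neg : t₀ < 0 := by
    rw [ht₀def, ← hT0]
    exact hmono hl'm hx₀ hl'2
  have hnebot : (nhdsWithin s (Set.Iio s)).NeBot := nhdsLT_neBot s
  have hsurj : ∀ v, t₀ < v → ∃ x ∈ Set.Ioo l s, T x = v := by
    intro v hv
    have h1 : ∀ᶠ x in nhdsWithin s (Set.Iio s), v < T x := hTtop.eventually_gt_atTop v
    have h2 : Set.Ioo x₀ s ∈ nhdsWithin s (Set.Iio s) := Ioo_mem_nhdsLT_of_mem ⟨hxs, le_refl s⟩
    obtain ⟨x₁, hx₁v, hx₁m⟩ := (h1.and (eventually_of_mem h2 fun x hx => hx)).exists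
    have hx₁ : x₁ ∈ Set.Ioo l s := ⟨lt_trans hlx hx₁m.1, hx₁m.2⟩
    have hl'x₁ : l' ≤ x₁ := le_of_lt (lt_trans hl'2 hx₁m.1)
    have hsub : Set.Icc l' x₁ ⊆ Set.Ioo l s := fun z hz =>
      ⟨lt_of_lt_of_le hl'1 hz.1, lt_of_le_of_lt hz.2 hx₁.2⟩
    have hv' : v ∈ Set.Icc (T l') (T x₁) := ⟨hv.le, hx₁v.le⟩
    obtain ⟨x, hxm, hxv⟩ := intermediate_value_Icc hl'x₁ (hTc.mono hsub) hv'
    exact ⟨x, hsub hxm, hxv⟩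
  set y : ℝ → ℝ := Function.invFunOn T (Set.Ioo l s) with hydef
  have hinj : Set.InjOn T (Set.Ioo l s) := hmono.injOn
  have hymem : ∀ v, t₀ < v → y v ∈ Set.Ioo l s :=
    fun v hv => Function.invFunOn_mem (hsurj v hv)
  have hTy : ∀ v, t₀ < v → T (y v) = v := fun v hv => Function.invFunOn_eq (hsurj v hv)
  have hy0 : y 0 = x₀ := by
    have h0 : T (y 0) = 0 := hTy 0 ht₀neg
    exact hinj (hymem 0 ht₀neg) hx₀ (by rw [h0, hT0])
  have hycont : ∀ v, t₀ < v → ContinuousAt y v := by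
    intro v hv
    have hxv := hymem v hv
    have hl'yv : l' < y v := by
      have h : T l' < T (y v) := by rw [hTy v hv]; exact hv
      exact (hmono.lt_iff_lt hl'm hxv).mp h
    rw [ContinuousAt, Metric.tendsto_nhds]
    intro ε hε
    set p : ℝ := max ((l' + y v) / 2) (y v - ε / 2) with hpdef
    set q : ℝ := min ((y v + s) / 2) (y v + ε / 2) with hqdef
    have hpv : p < y v := by
      apply max_lt
      · linarith
      · linarith
    have hvq : y v < q := by
      apply lt_min
      · linarith [hxv.2]
      · linarith
    have hl'p : l' < p := by
      calc l' < (l' + y v) / 2 := by linarith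
        _ ≤ p := le_max_left _ _
    have hpm : p ∈ Set.Ioo l s := ⟨lt_trans hl'1 hl'p, lt_trans hpv hxv.2⟩
    have hqm : q ∈ Set.Ioo l s := by
      refine ⟨lt_trans hpm.1 (lt_trans hpv hvq), ?_⟩
      calc q ≤ (y v + s) / 2 := min_le_left _ _
        _ < s := by linarith [hxv.2]
    have ht₀p : t₀ < T p := hmono hl'm hpm hl'p
    have hTpv : T p < v := by rw [← hTy v hv]; exact hmono hpm hxv hpv
    have hTvq : v < T q := by rw [← hTy v hv]; exact hmono hxv hqm hvq
    filter_upwards [Ioo_mem_nhds hTpv hTvq] with w hw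
    have hw0 : t₀ < w := lt_trans ht₀p hw.1
    have hyw := hymem w hw0
    have h1 : p < y w := (hmono.lt_iff_lt hpm hyw).mp (by rw [hTy w hw0]; exact hw.1)
    have h2 : y w < q := (hmono.lt_iff_lt hyw hqm).mp (by rw [hTy w hw0]; exact hw.2)
    rw [Real.dist_eq, abs_sub_lt_iff]
    have hq' : q ≤ y v + ε / 2 := min_le_right _ _
    have hp' : y v - ε / 2 ≤ p := le_max_right _ _
    constructor <;> linarith
  have hyder : ∀ v, t₀ < v → HasDerivAt y (g (y v)) v := by
    intro v hv
    have hxv := hymem v hv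
    have hgpos := hpos _ hxv
    have hev : ∀ᶠ w in nhds v, T (y w) = w := by
      filter_upwards [Ioi_mem_nhds hv] with w hw
      exact hTy w hw
    have h := HasDerivAt.of_local_left_inverse (hycont v hv) (hT (y v) hxv)
      (inv_ne_zero hgpos.ne') hev
    simpa [hf, inv_inv] using h
  exact ⟨y, hy0, fun t ht => hymem t (lt_of_lt_of_le ht₀neg ht),
    fun t ht => hyder t (lt_of_lt_of_le ht₀neg ht)⟩

set_option maxHeartbeats 2000000 in
theorem stmt_18 (r μ σ γ p : ℝ) (hσ : 0 < σ) (hγ : 0 < γ)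
    (hp : 0 < p) (hp1 : p < 1)
    (a b c : ℝ)
    (ha : a = p * (r + (μ - r) ^ 2 / (2 * σ ^ 2 * (1 - p))))
    (hb : b = -(p * Real.sqrt (3 * (1 - p) * σ ^ 2 * γ)) / (2 * Real.pi))
    (hc : c = γ * p / 2)
    (g : ℝ → ℝ) (hg : ∀ y, g y = a * y + b * Real.sqrt y + c) :
    (∀ y ∈ Set.Ioi (0 : ℝ), ∃ u ∈ nhds y, ∃ K : NNReal, LipschitzOnWith K g u) ∧
    (∃ y : ℝ → ℝ,
      y 0 = 1 ∧
      (∀ t, 0 ≤ t → 0 < y t) ∧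
      (∀ t, 0 ≤ t → HasDerivAt y (g (y t)) t) ∧
      (∀ z : ℝ → ℝ, z 0 = 1 → (∀ t, 0 ≤ t → 0 < z t) →
        (∀ t, 0 ≤ t → HasDerivAt z (g (z t)) t) →
        ∀ t, 0 ≤ t → z t = y t)) := by
  have hc0 : 0 < c := by rw [hc]; positivity
  have hgfun : g = fun y => a * y + b * Real.sqrt y + c := funext hg
  have hgc : Continuous g := by
    rw [hgfun]
    exact ((continuous_const.mul continuous_id).add
      (continuous_const.mul Real.continuous_sqrt)).add continuous_const
  have hglip : ∀ m : ℝ, 0 < m →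
      LipschitzOnWith (Real.toNNReal (|a| + |b| / (2 * Real.sqrt m))) g (Set.Ici m) := by
    intro m hm
    rw [hgfun]
    exact lipOn a b c m hm
  constructor
  · intro y0 hy0
    have hy0' : (0:ℝ) < y0 := hy0
    exact ⟨Set.Ici (y0 / 2), Ici_mem_nhds (by linarith),
      Real.toNNReal (|a| + |b| / (2 * Real.sqrt (y0 / 2))), hglip _ (by linarith)⟩
  obtain ⟨y, hy01, hypos, hyder⟩ : ∃ y : ℝ → ℝ, y 0 = 1 ∧ (∀ t, 0 ≤ t → 0 < y t) ∧
      (∀ t, 0 ≤ t → HasDerivAt y (g (y t)) t) := by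
    rcases lt_trichotomy (g 1) 0 with h1 | h1 | h1
    · -- decreasing case
      have hg0 : g 0 = c := by rw [hg]; simp
      set Z : Set ℝ := Set.Icc (0:ℝ) 1 ∩ {x | 0 ≤ g x} with hZdef
      have hZc : IsClosed Z := isClosed_Icc.inter (isClosed_le continuous_const hgc)
      have hZne : Z.Nonempty := ⟨0, ⟨le_refl 0, zero_le_one⟩, by
        simp only [Set.mem_setOf_eq, hg0]; linarith⟩
      have hZbdd : BddAbove Z := ⟨1, fun x hx => hx.1.2⟩
      set z0 : ℝ := sSup Z with hz0def
      have hz0m : z0 ∈ Z := hZc.csSup_mem hZne hZbdd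
      have hz0g : 0 ≤ g z0 := hz0m.2
      have hz01 : z0 < 1 := lt_of_le_of_ne hz0m.1.2 (fun h => by rw [h] at hz0g; linarith)
      have hz0pos : 0 < z0 := by
        have hev : ∀ᶠ x in nhds (0:ℝ), 0 < g x :=
          hgc.continuousAt.eventually_const_lt (by rw [hg0]; exact hc0)
        obtain ⟨δ, hδ0, hδ⟩ := Metric.eventually_nhds_iff.mp hev
        have hmem : min (δ/2) 1 ∈ Z := by
          refine ⟨⟨by positivity, min_le_right _ _⟩, ?_⟩
          have : 0 < g (min (δ/2) 1) := by
            apply hδ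
            rw [Real.dist_eq, sub_zero, abs_of_nonneg (le_min (by positivity) (by norm_num))]
            exact lt_of_le_of_lt (min_le_left _ _) (by linarith)
          exact this.le
        exact lt_of_lt_of_le (by positivity) (le_csSup hZbdd hmem)
      have hneg1 : ∀ x, z0 < x → x ≤ 1 → g x < 0 := by
        intro x hx hx1
        by_contra h
        push_neg at h
        exact absurd (le_csSup hZbdd ⟨⟨le_trans hz0pos.le hx.le, hx1⟩, h⟩) (not_le.2 hx)
      have hev1 : ∀ᶠ x in nhds (1:ℝ), g x < 0 := hgc.continuousAt.eventually_lt_const h1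
      obtain ⟨δ', hδ'0, hδ'⟩ := Metric.eventually_nhds_iff.mp hev1
      set d : ℝ := min δ' (1/2) with hddef
      have hdδ : d ≤ δ' := min_le_left _ _
      have hd0 : 0 < d := lt_min hδ'0 (by norm_num)
      have hlz1 : 1 - d < 1 := by linarith
      have h1sz : (1:ℝ) < 2 - z0 := by linarith
      have hgtpos : ∀ z ∈ Set.Ioo (1 - d) (2 - z0), 0 < -g (2 - z) := by
        rintro z ⟨hz1, hz2⟩
        have hx1 : z0 < 2 - z := by linarith
        rcases le_or_gt (2 - z) 1 with hle | hlt
        · linarith [hneg1 (2 - z) hx1 hle]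
        · have : g (2 - z) < 0 := by
            apply hδ'
            rw [Real.dist_eq, abs_of_nonneg (by linarith)]
            linarith
          linarith
      have hsqz0 : 0 < Real.sqrt z0 := Real.sqrt_pos.2 hz0pos
      have hLnn : (0:ℝ) ≤ |a| + |b| / (2 * Real.sqrt z0) := by positivity
      have hK0 : 0 < |a| + |b| / (2 * Real.sqrt z0) + 1 := by linarith
      have hgtbound : ∀ z ∈ Set.Ico 1 (2 - z0),
          -g (2 - z) ≤ (|a| + |b| / (2 * Real.sqrt z0) + 1) * (2 - z0 - z) := by
        rintro z ⟨hz1, hz2⟩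
        have hx1 : z0 < 2 - z := by linarith
        have hd := (hglip z0 hz0pos).dist_le_mul (2 - z) (le_of_lt hx1) z0 (le_refl z0)
        rw [Real.dist_eq, Real.dist_eq, Real.coe_toNNReal _ hLnn,
          abs_of_nonneg (by linarith : (0:ℝ) ≤ 2 - z - z0)] at hd
        have h1' : g z0 - g (2 - z) ≤ |g (2 - z) - g z0| := by
          rw [abs_sub_comm]; exact le_abs_self _
        have h2' : -g (2 - z) ≤ g z0 - g (2 - z) := by linarith
        have h4' : (0:ℝ) ≤ 2 - z - z0 := by linarith
        nlinarith [hd, h1', h2', h4']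
      obtain ⟨w, hw0, hwmem, hwder⟩ := core_ode (fun z => -g (2 - z)) (1 - d) (2 - z0) 1
        (|a| + |b| / (2 * Real.sqrt z0) + 1) hlz1 h1sz hK0
        ((hgc.comp (continuous_const.sub continuous_id)).neg).continuousOn hgtpos hgtbound
      refine ⟨fun t => 2 - w t, ?_, ?_, ?_⟩
      · show (2:ℝ) - w 0 = 1
        rw [hw0]; norm_num
      · intro t ht
        show (0:ℝ) < 2 - w t
        have := (hwmem t ht).2
        linarith
      · intro t ht
        have hd := (hwder t ht).const_sub 2
        have he : -(-g (2 - w t)) = g (2 - w t) := neg_neg _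
        rw [he] at hd
        exact hd
    · -- constant case
      exact ⟨fun _ => 1, rfl, fun t _ => one_pos, fun t _ => by
        rw [h1]; exact hasDerivAt_const t 1⟩
    · -- increasing case
      have hev : ∀ᶠ x in nhds (1:ℝ), 0 < g x := hgc.continuousAt.eventually_const_lt h1
      obtain ⟨δ, hδ0, hδ⟩ := Metric.eventually_nhds_iff.mp hev
      set l : ℝ := max (1 - δ/2) (1/2) with hldef
      have hl1 : l < 1 := max_lt (by linarith) (by norm_num)
      have hl0 : (0:ℝ) < l := lt_of_lt_of_le (by norm_num) (le_max_right _ _)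
      have hlow : ∀ x, l < x → x < 1 → 0 < g x := by
        intro x hx hx1
        apply hδ
        rw [Real.dist_eq, abs_of_nonpos (by linarith), neg_sub]
        have h' : 1 - δ/2 ≤ l := le_max_left _ _
        linarith
      by_cases hS : ∃ x, 1 ≤ x ∧ g x ≤ 0
      · -- a zero above 1 exists
        set S : Set ℝ := {x | 1 ≤ x} ∩ {x | g x ≤ 0} with hSdef
        have hSc : IsClosed S :=
          (isClosed_le continuous_const continuous_id).inter (isClosed_le hgc continuous_const)
        have hSne : S.Nonempty := by
          obtain ⟨x, hx1, hx2⟩ := hS; exact ⟨x, hx1, hx2⟩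
        have hSbdd : BddBelow S := ⟨1, fun x hx => hx.1⟩
        set s : ℝ := sInf S with hsdef
        have hsm : s ∈ S := hSc.csInf_mem hSne hSbdd
        have hgs0 : g s ≤ 0 := hsm.2
        have hs1' : (1:ℝ) ≤ s := hsm.1
        have hs1 : (1:ℝ) < s := lt_of_le_of_ne hs1' (fun h => by rw [← h] at hgs0; linarith)
        have hposmid : ∀ x, 1 ≤ x → x < s → 0 < g x := by
          intro x hx1 hxs
          by_contra h
          push_neg at h
          exact absurd (csInf_le hSbdd ⟨hx1, h⟩) (not_le.2 hxs)
        have hposIoo : ∀ x ∈ Set.Ioo l s, 0 < g x := by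
          rintro x ⟨hx1, hx2⟩
          rcases lt_or_ge x 1 with h | h
          · exact hlow x hx1 h
          · exact hposmid x h hx2
        have hLnn : (0:ℝ) ≤ |a| + |b| / (2 * Real.sqrt 1) := by positivity
        have hK0 : (0:ℝ) < |a| + |b| / (2 * Real.sqrt 1) + 1 := by linarith
        have hbound : ∀ x ∈ Set.Ico 1 s,
            g x ≤ (|a| + |b| / (2 * Real.sqrt 1) + 1) * (s - x) := by
          rintro x ⟨hx1, hx2⟩
          have hd := (hglip 1 one_pos).dist_le_mul x hx1 s hs1.le
          rw [Real.dist_eq, Real.dist_eq, Real.coe_toNNReal _ hLnn] at hd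
          rw [show |x - s| = s - x from by
            rw [abs_sub_comm]; exact abs_of_nonneg (by linarith)] at hd
          have h1' : g x - g s ≤ |g x - g s| := le_abs_self _
          have h4' : (0:ℝ) ≤ s - x := by linarith
          nlinarith [hd, h1', hgs0, h4']
        obtain ⟨y, hy0, hymem, hyder⟩ := core_ode g l s 1
          (|a| + |b| / (2 * Real.sqrt 1) + 1) hl1 hs1 hK0
          hgc.continuousOn hposIoo hbound
        exact ⟨y, hy0, fun t ht => lt_trans hl0 (hymem t ht).1, hyder⟩
      · -- no zero above 1: compactify
        push_neg at hS
        have hposl : ∀ x, l < x → 0 < g x := by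
          intro x hx
          rcases lt_or_ge x 1 with h | h
          · exact hlow x hx h
          · exact hS x h
        have h1l : (0:ℝ) < 1 + l := by linarith
        have hlh2 : l / (1 + l) < 1/2 := by
          rw [div_lt_iff₀ h1l]; linarith
        have hxval : ∀ w : ℝ, l / (1 + l) < w → w < 1 → l < w / (1 - w) := by
          intro w hw1 hw2
          have h1w : (0:ℝ) < 1 - w := by linarith
          rw [lt_div_iff₀ h1w]
          have := (div_lt_iff₀ h1l).mp hw1
          linarith
        have hghc : ContinuousOn (fun w : ℝ => (1 - w)^2 * g (w / (1 - w)))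
            (Set.Ioo (l / (1 + l)) 1) := by
          apply ContinuousOn.mul
          · exact ((continuous_const.sub continuous_id).pow 2).continuousOn
          · apply hgc.comp_continuousOn
            apply ContinuousOn.div continuousOn_id
              (continuous_const.sub continuous_id).continuousOn
            rintro w ⟨_, hw2⟩
            have : (0:ℝ) < 1 - w := by linarith [hw2]
            exact ne_of_gt this
        have hghpos : ∀ w ∈ Set.Ioo (l / (1 + l)) 1,
            0 < (1 - w)^2 * g (w / (1 - w)) := by
          rintro w ⟨hw1, hw2⟩
          have h1w : (0:ℝ) < 1 - w := by linarith
          exact mul_pos (by positivity) (hposl _ (hxval w hw1 hw2))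
        have hK0 : (0:ℝ) < |a| + |b| + c + 1 := by
          have := abs_nonneg a; have := abs_nonneg b; linarith
        have hbound : ∀ w ∈ Set.Ico (1/2 : ℝ) 1,
            (1 - w)^2 * g (w / (1 - w)) ≤ (|a| + |b| + c + 1) * (1 - w) := by
          rintro w ⟨hw1, hw2⟩
          have h1w : (0:ℝ) < 1 - w := by linarith
          have hx0 : (0:ℝ) ≤ w / (1 - w) := div_nonneg (by linarith) h1w.le
          have hsq : Real.sqrt (w / (1 - w)) ≤ 1 + w / (1 - w) := by
            rcases le_total (w / (1 - w)) 1 with h | h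
            · have h' := Real.sqrt_le_sqrt h
              rw [Real.sqrt_one] at h'
              linarith
            · have h2 : Real.sqrt (w / (1 - w)) ≤ Real.sqrt ((w / (1 - w))^2) :=
                Real.sqrt_le_sqrt (by nlinarith)
              rw [Real.sqrt_sq hx0] at h2
              linarith
          have hgle : g (w / (1 - w)) ≤ (|a| + |b| + c) * (1 + w / (1 - w)) := by
            rw [hg]
            have hh1 : a * (w / (1 - w)) ≤ |a| * (w / (1 - w)) :=
              mul_le_mul_of_nonneg_right (le_abs_self a) hx0
            have hh2 : b * Real.sqrt (w / (1 - w)) ≤ |b| * (1 + w / (1 - w)) := by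
              calc b * Real.sqrt (w / (1 - w)) ≤ |b * Real.sqrt (w / (1 - w))| := le_abs_self _
                _ = |b| * Real.sqrt (w / (1 - w)) := by
                    rw [abs_mul, abs_of_nonneg (Real.sqrt_nonneg _)]
                _ ≤ |b| * (1 + w / (1 - w)) := mul_le_mul_of_nonneg_left hsq (abs_nonneg b)
            nlinarith [abs_nonneg a, abs_nonneg b]
          have hxw : (1 + w / (1 - w)) * (1 - w) = 1 := by field_simp; ring
          have h5 : (1 - w)^2 * g (w / (1 - w)) ≤
              (1 - w)^2 * ((|a| + |b| + c) * (1 + w / (1 - w))) :=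
            mul_le_mul_of_nonneg_left hgle (sq_nonneg _)
          have h6 : (1 - w)^2 * ((|a| + |b| + c) * (1 + w / (1 - w))) =
              (|a| + |b| + c) * (1 - w) := by
            have e : (1 - w)^2 * ((|a| + |b| + c) * (1 + w / (1 - w))) =
                (|a| + |b| + c) * ((1 + w / (1 - w)) * (1 - w)) * (1 - w) := by ring
            rw [e, hxw, mul_one]
          have h7 : (|a| + |b| + c) * (1 - w) ≤ (|a| + |b| + c + 1) * (1 - w) := by
            apply mul_le_mul_of_nonneg_right _ h1w.le
            linarith
          linarith
        obtain ⟨w, hw0, hwmem, hwder⟩ := core_ode (fun w : ℝ => (1 - w)^2 * g (w / (1 - w)))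
          (l / (1 + l)) 1 (1/2) (|a| + |b| + c + 1) hlh2 (by norm_num) hK0
          hghc hghpos hbound
        refine ⟨fun t => w t / (1 - w t), ?_, ?_, ?_⟩
        · show w 0 / (1 - w 0) = 1
          rw [hw0]; norm_num
        · intro t ht
          have hwt := hwmem t ht
          exact lt_trans hl0 (hxval (w t) hwt.1 hwt.2)
        · intro t ht
          have hwt := hwmem t ht
          have h1w : (0:ℝ) < 1 - w t := by linarith [hwt.2]
          have hd := (hwder t ht).div ((hasDerivAt_const t (1:ℝ)).sub (hwder t ht))
            (ne_of_gt h1w)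
          have heq : ((1 - w t)^2 * g (w t / (1 - w t)) * (1 - w t) -
              w t * (0 - (1 - w t)^2 * g (w t / (1 - w t)))) / (1 - w t) ^ 2 =
              g (w t / (1 - w t)) := by
            field_simp
            ring
          simp only [Pi.sub_apply] at hd
          rw [heq] at hd
          exact hd
  refine ⟨y, hy01, hypos, hyder, ?_⟩
  intro z hz0 hzpos hzder t ht
  have hycont : ContinuousOn y (Set.Icc 0 t) :=
    fun τ hτ => (hyder τ hτ.1).continuousAt.continuousWithinAt
  have hzcont : ContinuousOn z (Set.Icc 0 t) :=
    fun τ hτ => (hzder τ hτ.1).continuousAt.continuousWithinAt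
  obtain ⟨τy, hτy, hminy⟩ := isCompact_Icc.exists_isMinOn (Set.nonempty_Icc.2 ht) hycont
  obtain ⟨τz, hτz, hminz⟩ := isCompact_Icc.exists_isMinOn (Set.nonempty_Icc.2 ht) hzcont
  have hε : 0 < min (y τy) (z τz) := lt_min (hypos _ hτy.1) (hzpos _ hτz.1)
  have hlip := hglip _ hε
  have heq := ODE_solution_unique_of_mem_Icc_right
    (v := fun _ x => g x) (s := fun _ => Set.Ici (min (y τy) (z τz)))
    (fun _ _ => hlip)
    hzcont (fun τ hτ => (hzder τ hτ.1).hasDerivWithinAt)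
    (fun τ hτ => Set.mem_Ici.2 (le_trans (min_le_right _ _) (hminz ⟨hτ.1, hτ.2.le⟩)))
    hycont (fun τ hτ => (hyder τ hτ.1).hasDerivWithinAt)
    (fun τ hτ => Set.mem_Ici.2 (le_trans (min_le_left _ _) (hminy ⟨hτ.1, hτ.2.le⟩)))
    (by rw [hz0, hy01])
  exact heq ⟨ht, le_refl t⟩
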